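/- Let Ω = {0,1}^∞. For every ε ∈ (0,1] there exists a test T, mapping each strongly nonatomic finitely additive probability P with the Blackwell–Dubins property to an open set T(P) ⊆ Ω, such that (i) P(T(P)) ≤ ε for every such P, and (ii) for every finitely supported probability ζ on the set of such P's there is a cylinder C_ζ with ζ({P : ω ∉ T(P)}) = 0 for every ω ∈ C_ζ. -/

import Mathlib

open Filter Topology
open scoped Classical


/-- A path in `{0,1}^∞`. -/
abbrev BinSeq := ℕ → Bool

/-- The cylinder of length `t` with base `ω`: all sequences agreeing with `ω`
in the first `t` coordinates. -/
def cyl {X : Type*} (ω : ℕ → X) (t : ℕ) : Set (ℕ → X) := {ω' | ∀ i < t, ω' i = ω i}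

/-- An algebra of subsets of `Ω`. -/
structure SetAlgebra (Ω : Type*) where
  sets : Set (Set Ω)
  univ_mem : Set.univ ∈ sets
  compl_mem : ∀ S ∈ sets, Sᶜ ∈ sets
  union_mem : ∀ S ∈ sets, ∀ T ∈ sets, S ∪ T ∈ sets

/-- The algebra is a σ-algebra: closed under countable unions. -/
def SetAlgebra.IsSigmaAlgebra {Ω : Type*} (A : SetAlgebra Ω) : Prop :=
  ∀ f : ℕ → Set Ω, (∀ n, f n ∈ A.sets) → (⋃ n, f n) ∈ A.sets

/-- The power-set algebra. -/
def SetAlgebra.top (Ω : Type*) : SetAlgebra Ω :=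
  ⟨Set.univ, trivial, fun _ _ => trivial, fun _ _ _ _ => trivial⟩

/-- A finitely additive probability on `(Ω, A)`.  The function `m` is defined on all
subsets for convenience; only its values on `A.sets` are constrained. -/
structure FA {Ω : Type*} (A : SetAlgebra Ω) where
  m : Set Ω → ℝ
  nonneg : ∀ S ∈ A.sets, 0 ≤ m S
  total : m Set.univ = 1
  add : ∀ S ∈ A.sets, ∀ T ∈ A.sets, Disjoint S T → m (S ∪ T) = m S + m T

/-- Conditional probability `P(E | C) = P(E ∩ C) / P(C)`. -/
noncomputable def FA.cond {Ω : Type*} {A : SetAlgebra Ω} (P : FA A) (E C : Set Ω) : ℝ :=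
  P.m (E ∩ C) / P.m C

/-- `Q` is absolutely continuous w.r.t. `P` (written `Q ≪ P` in the paper):
for every sequence of events, `P(Eₙ) → 0` implies `Q(Eₙ) → 0`. -/
def AbsCont {Ω : Type*} {A : SetAlgebra Ω} (P Q : FA A) : Prop :=
  ∀ E : ℕ → Set Ω, (∀ n, E n ∈ A.sets) →
    Tendsto (fun n => P.m (E n)) atTop (𝓝 0) → Tendsto (fun n => Q.m (E n)) atTop (𝓝 0)

/-- `P` merges with `Q`: for every `ε > 0`, the `Q`-probability of the set of paths where
some event has conditional probabilities (given the first `t` coordinates) differing by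
more than `ε` tends to `0` as `t → ∞`.  (`sup_E |P(E|ωᵗ) - Q(E|ωᵗ)| > ε` is expressed
equivalently as `∃ E`.) -/
def Merges {A : SetAlgebra BinSeq} (P Q : FA A) : Prop :=
  ∀ ε > 0, Tendsto
    (fun t => Q.m {ω | ∃ E ∈ A.sets, ε < |P.cond E (cyl ω t) - Q.cond E (cyl ω t)|})
    atTop (𝓝 0)

/-- Membership in the algebra `F` generated by the cylinders of `{0,1}^∞`:
the finite unions of cylinders (the empty union giving `∅`). -/
def InCylAlg (S : Set BinSeq) : Prop :=
  ∃ (n : ℕ) (f : Fin n → BinSeq × ℕ), S = ⋃ i, cyl (f i).1 (f i).2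

/-- `Q` agrees with `P` on the algebra generated by cylinders, i.e. `Q` is an
extension of `P_F` from `F` to `Σ`. -/
def ExtAgree {A : SetAlgebra BinSeq} (P Q : FA A) : Prop :=
  ∀ S, InCylAlg S → Q.m S = P.m S

/-- `P` is an extreme point of the set `E(P_F, F, Σ)` of extensions of its restriction
to the cylinder algebra: any representation of `P` as a nontrivial convex combination
of two extensions forces the two extensions to coincide (with `P`). -/
def ExtremePoint {A : SetAlgebra BinSeq} (P : FA A) : Prop :=
  ∀ Q R : FA A, ExtAgree P Q → ExtAgree P R →
    ∀ α : ℝ, 0 < α → α < 1 →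
      (∀ S ∈ A.sets, P.m S = α * Q.m S + (1 - α) * R.m S) →
      ∀ S ∈ A.sets, Q.m S = R.m S

/-- `P` is strongly nonatomic (Savagean): every event can be split in any proportion. -/
def StronglyNonatomic {Ω : Type*} {A : SetAlgebra Ω} (P : FA A) : Prop :=
  ∀ E ∈ A.sets, ∀ α : ℝ, 0 ≤ α → α ≤ 1 → ∃ F ∈ A.sets, F ⊆ E ∧ P.m F = α * P.m E

/-- The Blackwell–Dubins property: `P` merges with every `Q ≪ P`. -/
def BDProp {A : SetAlgebra BinSeq} (P : FA A) : Prop :=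
  ∀ Q : FA A, AbsCont P Q → Merges P Q

/-! ### Auxiliary lemmas -/

lemma cyl_zero {X : Type*} (ω : ℕ → X) : cyl ω 0 = Set.univ := by
  ext ω'; simp [cyl]

lemma cyl_anti {X : Type*} (ω : ℕ → X) {s t : ℕ} (h : s ≤ t) : cyl ω t ⊆ cyl ω s :=
  fun _ hω' i hi => hω' i (lt_of_lt_of_le hi h)

lemma cyl_eq_of_mem {X : Type*} {ω₀ ω : ℕ → X} {t : ℕ} (h : ω ∈ cyl ω₀ t) :
    cyl ω t = cyl ω₀ t := by
  ext ω'
  exact ⟨fun h' i hi => (h' i hi).trans (h i hi), fun h' i hi => (h' i hi).trans (h i hi).symm⟩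

lemma isOpen_cyl (ω : BinSeq) (t : ℕ) : IsOpen (cyl ω t) := by
  have : cyl ω t = ⋂ i ∈ Finset.range t, (fun ω' : BinSeq => ω' i) ⁻¹' {ω i} := by
    ext ω'; simp [cyl, Finset.mem_range, Set.mem_preimage]
  rw [this]
  exact isOpen_biInter_finset fun i _ =>
    (continuous_apply i).isOpen_preimage _ (isOpen_discrete _)

lemma SetAlgebra.inter_mem' {Ω : Type*} (A : SetAlgebra Ω) {S T : Set Ω}
    (hS : S ∈ A.sets) (hT : T ∈ A.sets) : S ∩ T ∈ A.sets := by
  have := A.compl_mem _ (A.union_mem _ (A.compl_mem _ hS) _ (A.compl_mem _ hT))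
  simpa [Set.compl_union] using this

lemma SetAlgebra.diff_mem' {Ω : Type*} (A : SetAlgebra Ω) {S T : Set Ω}
    (hS : S ∈ A.sets) (hT : T ∈ A.sets) : S \ T ∈ A.sets := by
  rw [Set.diff_eq]; exact A.inter_mem' hS (A.compl_mem _ hT)

lemma FA.mono' {Ω : Type*} {A : SetAlgebra Ω} (P : FA A) {S T : Set Ω}
    (hS : S ∈ A.sets) (hT : T ∈ A.sets) (h : S ⊆ T) : P.m S ≤ P.m T := by
  have hd : T \ S ∈ A.sets := A.diff_mem' hT hS
  have hadd := P.add S hS (T \ S) hd disjoint_sdiff_self_right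
  rw [Set.union_diff_cancel h] at hadd
  have := P.nonneg _ hd
  linarith

/-! ### The tail charge -/

noncomputable def tailM {A : SetAlgebra BinSeq} (P : FA A) (ω₀ : BinSeq) (E : Set BinSeq) : ℝ :=
  ⨅ t, P.m (E ∩ cyl ω₀ t)

section tail

variable {A : SetAlgebra BinSeq} (P : FA A) (ω₀ : BinSeq)
variable (hcyl : ∀ (ω : BinSeq) (t : ℕ), cyl ω t ∈ A.sets)
include hcyl

lemma tail_bdd {E : Set BinSeq} (hE : E ∈ A.sets) :
    BddBelow (Set.range fun t => P.m (E ∩ cyl ω₀ t)) := by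
  refine ⟨0, ?_⟩
  rintro x ⟨t, rfl⟩
  exact P.nonneg _ (A.inter_mem' hE (hcyl ω₀ t))

lemma tail_anti {E : Set BinSeq} (hE : E ∈ A.sets) :
    Antitone fun t => P.m (E ∩ cyl ω₀ t) := fun s t h =>
  P.mono' (A.inter_mem' hE (hcyl ω₀ t)) (A.inter_mem' hE (hcyl ω₀ s))
    (Set.inter_subset_inter_right E (cyl_anti ω₀ h))

lemma tail_tendsto {E : Set BinSeq} (hE : E ∈ A.sets) :
    Tendsto (fun t => P.m (E ∩ cyl ω₀ t)) atTop (𝓝 (tailM P ω₀ E)) :=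
  tendsto_atTop_ciInf (tail_anti P ω₀ hcyl hE) (tail_bdd P ω₀ hcyl hE)

lemma tail_nonneg {E : Set BinSeq} (hE : E ∈ A.sets) : 0 ≤ tailM P ω₀ E :=
  le_ciInf fun t => P.nonneg _ (A.inter_mem' hE (hcyl ω₀ t))

lemma tail_le {E : Set BinSeq} (hE : E ∈ A.sets) : tailM P ω₀ E ≤ P.m E := by
  have := ciInf_le (tail_bdd P ω₀ hcyl hE) 0
  rwa [cyl_zero, Set.inter_univ] at this

lemma tail_add {E F : Set BinSeq} (hE : E ∈ A.sets) (hF : F ∈ A.sets) (hEF : Disjoint E F) :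
    tailM P ω₀ (E ∪ F) = tailM P ω₀ E + tailM P ω₀ F := by
  have h1 := tail_tendsto P ω₀ hcyl (A.union_mem _ hE _ hF)
  have h2 := (tail_tendsto P ω₀ hcyl hE).add (tail_tendsto P ω₀ hcyl hF)
  have heq : (fun t => P.m ((E ∪ F) ∩ cyl ω₀ t))
      = fun t => P.m (E ∩ cyl ω₀ t) + P.m (F ∩ cyl ω₀ t) := by
    funext t
    rw [Set.union_inter_distrib_right]
    exact P.add _ (A.inter_mem' hE (hcyl ω₀ t)) _ (A.inter_mem' hF (hcyl ω₀ t))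
      (hEF.mono Set.inter_subset_left Set.inter_subset_left)
  rw [heq] at h1
  exact tendsto_nhds_unique h1 h2

lemma tail_inter_cyl {E : Set BinSeq} (hE : E ∈ A.sets) (t : ℕ) :
    tailM P ω₀ (E ∩ cyl ω₀ t) = tailM P ω₀ E := by
  have h1 := tail_tendsto P ω₀ hcyl (A.inter_mem' hE (hcyl ω₀ t))
  have h2 : Tendsto (fun s => P.m ((E ∩ cyl ω₀ t) ∩ cyl ω₀ s)) atTop (𝓝 (tailM P ω₀ E)) := by
    refine (tail_tendsto P ω₀ hcyl hE).congr' ?_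
    filter_upwards [eventually_ge_atTop t] with s hs
    rw [Set.inter_assoc, Set.inter_eq_self_of_subset_right (cyl_anti ω₀ hs)]
  exact tendsto_nhds_unique h1 h2

end tail

/-! ### The conditional-tail opinion -/

noncomputable def condTailFA {A : SetAlgebra BinSeq} (P : FA A) (ω₀ : BinSeq) (S : Set BinSeq)
    (hcyl : ∀ (ω : BinSeq) (t : ℕ), cyl ω t ∈ A.sets) (hS : S ∈ A.sets)
    (hτ : 0 < tailM P ω₀ S) : FA A where
  m X := if X ∈ A.sets then tailM P ω₀ (X ∩ S) / tailM P ω₀ S else 1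
  nonneg X hX := by
    rw [if_pos hX]
    exact div_nonneg (tail_nonneg P ω₀ hcyl (A.inter_mem' hX hS)) hτ.le
  total := by
    rw [if_pos A.univ_mem, Set.univ_inter]
    exact div_self hτ.ne'
  add X hX Y hY hXY := by
    rw [if_pos hX, if_pos hY, if_pos (A.union_mem _ hX _ hY), Set.union_inter_distrib_right,
      tail_add P ω₀ hcyl (A.inter_mem' hX hS) (A.inter_mem' hY hS)
        (hXY.mono Set.inter_subset_left Set.inter_subset_left), add_div]

/-! ### The key lemma: BD opinions make some cylinder around a fixed path small -/

lemma key_small_cylinder (A : SetAlgebra BinSeq)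
    (hcyl : ∀ (ω : BinSeq) (t : ℕ), cyl ω t ∈ A.sets)
    {ε : ℝ} (hε0 : 0 < ε) (P : FA A) (hSN : StronglyNonatomic P) (hBD : BDProp P) :
    ∃ t, P.m (cyl (fun _ => false) t) ≤ ε := by
  by_contra hcon
  push_neg at hcon
  set ω₀ : BinSeq := fun _ => false with hω₀
  have hδ : ε ≤ tailM P ω₀ Set.univ := le_ciInf fun t => by
    rw [Set.univ_inter]; exact (hcon t).le
  have hδ0 : 0 < tailM P ω₀ Set.univ := lt_of_lt_of_le hε0 hδ
  -- finite splitting: find a set with small P-measure and positive tail mass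
  have split : ∀ k : ℕ, ∃ S ∈ A.sets, P.m S ≤ (1/2 : ℝ) ^ k ∧ 0 < tailM P ω₀ S := by
    intro k
    induction k with
    | zero => exact ⟨Set.univ, A.univ_mem, by simp [P.total], hδ0⟩
    | succ k ih =>
      obtain ⟨S, hS, hP, hT⟩ := ih
      obtain ⟨F, hF, hFS, hPF⟩ := hSN S hS (1/2) (by norm_num) (by norm_num)
      have hSF : S \ F ∈ A.sets := A.diff_mem' hS hF
      have hunion : F ∪ (S \ F) = S := Set.union_diff_cancel hFS
      have hadd := P.add F hF (S \ F) hSF disjoint_sdiff_self_right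
      rw [hunion] at hadd
      have hPSF : P.m (S \ F) = (1/2) * P.m S := by linarith
      have hTsum : tailM P ω₀ F + tailM P ω₀ (S \ F) = tailM P ω₀ S := by
        have := tail_add P ω₀ hcyl hF hSF disjoint_sdiff_self_right
        rw [hunion] at this
        linarith
      have hPm0 : 0 ≤ P.m S := P.nonneg _ hS
      have hhalf : (1/2 : ℝ) * P.m S ≤ (1/2 : ℝ) ^ (k+1) := by
        rw [pow_succ]; nlinarith
      rcases lt_or_ge 0 (tailM P ω₀ F) with h | h
      · exact ⟨F, hF, by rw [hPF]; exact hhalf, h⟩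
      · have hFnn := tail_nonneg P ω₀ hcyl hF
        have : 0 < tailM P ω₀ (S \ F) := by
          have : tailM P ω₀ F = 0 := le_antisymm h hFnn
          linarith
        exact ⟨S \ F, hSF, by rw [hPSF]; exact hhalf, this⟩
  obtain ⟨k, hk⟩ := exists_pow_lt_of_lt_one hε0 (by norm_num : (1/2 : ℝ) < 1)
  obtain ⟨S, hS, hPS, hτ⟩ := split k
  set τ := tailM P ω₀ S with hτdef
  set δ := tailM P ω₀ Set.univ with hδdef
  have hτle : τ ≤ P.m S := tail_le P ω₀ hcyl hS
  have hτδ : τ < δ := lt_of_le_of_lt (hτle.trans hPS) (lt_of_lt_of_le hk hδ)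
  -- the manipulating opinion
  set Q := condTailFA P ω₀ S hcyl hS hτ with hQ
  have hQm : ∀ X, Q.m X = if X ∈ A.sets then tailM P ω₀ (X ∩ S) / τ else 1 := fun X => rfl
  have hQP : AbsCont P Q := by
    intro E hE hP0
    have hle : ∀ n, Q.m (E n) ≤ P.m (E n) / τ := by
      intro n
      rw [hQm, if_pos (hE n)]
      have h1 : tailM P ω₀ (E n ∩ S) ≤ P.m (E n) :=
        (tail_le P ω₀ hcyl (A.inter_mem' (hE n) hS)).trans
          (P.mono' (A.inter_mem' (hE n) hS) (hE n) Set.inter_subset_left)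
      exact (div_le_div_iff_of_pos_right hτ).mpr h1
    have hge : ∀ n, 0 ≤ Q.m (E n) := fun n => Q.nonneg _ (hE n)
    have hP0' : Tendsto (fun n => P.m (E n) / τ) atTop (𝓝 0) := by
      simpa using hP0.div_const τ
    exact squeeze_zero hge hle hP0'
  have hmerge := hBD Q hQP
  set ε' := (δ - τ) / (2 * δ) with hε'
  have hε'0 : 0 < ε' := div_pos (by linarith) (by linarith)
  have hten := hmerge ε' hε'0
  have hnear : ∀ᶠ t in atTop, P.m (S ∩ cyl ω₀ t) < τ + (δ - τ) / 4 :=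
    (tail_tendsto P ω₀ hcyl hS).eventually_lt_const (by linarith)
  have hbig : ∀ᶠ t in atTop, (1 : ℝ) ≤
      Q.m {ω | ∃ E ∈ A.sets, ε' < |P.cond E (cyl ω t) - Q.cond E (cyl ω t)|} := by
    filter_upwards [hnear] with t ht
    have hQC : Q.m (cyl ω₀ t) = 1 := by
      rw [hQm, if_pos (hcyl ω₀ t), Set.inter_comm, tail_inter_cyl P ω₀ hcyl hS]
      exact div_self hτ.ne'
    have hQSC : Q.m (S ∩ cyl ω₀ t) = 1 := by
      rw [hQm, if_pos (A.inter_mem' hS (hcyl ω₀ t)),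
        Set.inter_eq_left.mpr Set.inter_subset_left, tail_inter_cyl P ω₀ hcyl hS]
      exact div_self hτ.ne'
    have hδle : δ ≤ P.m (cyl ω₀ t) := by
      have := ciInf_le (tail_bdd P ω₀ hcyl A.univ_mem) t
      rwa [Set.univ_inter] at this
    have hPc : P.cond S (cyl ω₀ t) ≤ (τ + (δ - τ) / 4) / δ := by
      unfold FA.cond
      apply div_le_div₀ (by linarith) ht.le (by linarith) hδle
    have hQc : Q.cond S (cyl ω₀ t) = 1 := by
      unfold FA.cond
      rw [hQSC, hQC, div_one]
    have hsum : ε' + (τ + (δ - τ) / 4) / δ < 1 := by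
      have h4 : ε' + (τ + (δ - τ) / 4) / δ = (3 * δ + τ) / (4 * δ) := by
        rw [hε']; field_simp; ring
      rw [h4, div_lt_one (by linarith)]
      linarith
    have hsub : cyl ω₀ t ⊆
        {ω | ∃ E ∈ A.sets, ε' < |P.cond E (cyl ω t) - Q.cond E (cyl ω t)|} := by
      intro ω hω
      refine ⟨S, hS, ?_⟩
      rw [cyl_eq_of_mem hω, hQc]
      have h5 : ε' < 1 - P.cond S (cyl ω₀ t) := by linarith
      calc ε' < 1 - P.cond S (cyl ω₀ t) := h5
        _ ≤ |1 - P.cond S (cyl ω₀ t)| := le_abs_self _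
        _ = |P.cond S (cyl ω₀ t) - 1| := abs_sub_comm _ _
    by_cases hB : {ω | ∃ E ∈ A.sets, ε' < |P.cond E (cyl ω t) - Q.cond E (cyl ω t)|} ∈ A.sets
    · calc (1 : ℝ) = Q.m (cyl ω₀ t) := hQC.symm
        _ ≤ _ := Q.mono' (hcyl ω₀ t) hB hsub
    · rw [hQm, if_neg hB]
  have hlt := hten.eventually_lt_const (by norm_num : (0:ℝ) < 1)
  obtain ⟨t, h1, h2⟩ := (hbig.and hlt).exists
  linarith

/-- Theorem 3: for every `ε ∈ (0,1]` there is a test `T` mapping opinions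
with the Blackwell–Dubins property to open sets such that (i) `T` controls type I error
with probability `1 − ε` on `Δ_BD`, and (ii) `T` is nonmanipulable: for every finitely
supported strategy `ζ` over `Δ_BD` there is a cylinder on which the `ζ`-probability of
passing is `0`. -/

theorem exists_nonmanipulable_test
    (A : SetAlgebra BinSeq) (hσ : A.IsSigmaAlgebra)
    (hcyl : ∀ (ω : BinSeq) (t : ℕ), cyl ω t ∈ A.sets)
    (ε : ℝ) (hε0 : 0 < ε) (hε1 : ε ≤ 1) :
    ∃ T : FA A → Set BinSeq,
      (∀ P : FA A, StronglyNonatomic P → BDProp P → IsOpen (T P) ∧ P.m (T P) ≤ ε) ∧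
      (∀ (n : ℕ) (w : Fin n → ℝ) (Ps : Fin n → FA A),
        (∀ i, 0 ≤ w i) → (∑ i, w i) = 1 →
        (∀ i, StronglyNonatomic (Ps i) ∧ BDProp (Ps i)) →
        ∃ (ω₀ : BinSeq) (t : ℕ), ∀ ω ∈ cyl ω₀ t,
          (∑ i ∈ Finset.univ.filter (fun i => ω ∉ T (Ps i)), w i) = 0) := by
  classical
  set ω₀ : BinSeq := fun _ => false with hω₀
  have hchoice : ∀ P : FA A, ∃ t : ℕ,
      (StronglyNonatomic P → BDProp P → P.m (cyl ω₀ t) ≤ ε) := by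
    intro P
    by_cases h : StronglyNonatomic P ∧ BDProp P
    · obtain ⟨t, ht⟩ := key_small_cylinder A hcyl hε0 P h.1 h.2
      exact ⟨t, fun _ _ => ht⟩
    · exact ⟨0, fun h1 h2 => absurd ⟨h1, h2⟩ h⟩
  choose tOf htOf using hchoice
  refine ⟨fun P => cyl ω₀ (tOf P), ?_, ?_⟩
  · intro P hSN hBD
    exact ⟨isOpen_cyl ω₀ (tOf P), htOf P hSN hBD⟩
  · intro n w Ps hw hsum hgood
    refine ⟨ω₀, Finset.univ.sup fun i => tOf (Ps i), fun ω hω => ?_⟩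
    refine Finset.sum_eq_zero fun i hi => ?_
    rw [Finset.mem_filter] at hi
    exact absurd (cyl_anti ω₀ (Finset.le_sup (Finset.mem_univ i)) hω) hi.2
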